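/- With f_{n,ε} defined recursively by f_{1,ε} = f_ε and f_{n+1,ε}(x,y) = ∫ f_{n,ε}(x,z) f_ε(z,y) dz + (b̄ - b_ε(y)) f_{n,ε}(x,y) + (b̄ - b_ε(x))^n f_ε(x,y), where b_ε(x) = ∫ f_ε(x,y) dy and b̄ = sup_x b_ε(x) < ∞, one has for every x and n ≥ 1: ∫ f_{n,ε}(x,y) dy = b̄^n - (b̄ - b_ε(x))^n. -/

import Mathlib

open MeasureTheory
open scoped ENNReal

lemma aux_prod_integrable {α : Type*} [MeasurableSpace α] {μ : Measure α} [SigmaFinite μ]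
    {g : α → ℝ} {k : α → α → ℝ} (hg : Measurable g) (hg0 : ∀ z, 0 ≤ g z)
    (hgi : Integrable g μ) (hk : Measurable (Function.uncurry k))
    (hk0 : ∀ z y, 0 ≤ k z y) (hki : ∀ z, Integrable (k z) μ)
    {C : ℝ} (hC : ∀ z, (∫ y, k z y ∂μ) ≤ C) :
    Integrable (fun p : α × α => g p.1 * k p.1 p.2) (μ.prod μ) := by
  have hmeas : Measurable fun p : α × α => g p.1 * k p.1 p.2 :=
    (hg.comp measurable_fst).mul hk
  refine ⟨hmeas.aestronglyMeasurable, ?_⟩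
  have key : ∀ z y : α, ‖g z * k z y‖ₑ
      = ENNReal.ofReal (g z) * ENNReal.ofReal (k z y) := by
    intro z y
    rw [← ENNReal.ofReal_mul (hg0 z),
      Real.enorm_eq_ofReal (mul_nonneg (hg0 z) (hk0 z y))]
  have hkm : ∀ z, Measurable (k z) := fun z => hk.comp measurable_prodMk_left
  have calc1 : (∫⁻ p, ‖g p.1 * k p.1 p.2‖ₑ ∂(μ.prod μ))
      = ∫⁻ z, ENNReal.ofReal (g z) * ENNReal.ofReal (∫ y, k z y ∂μ) ∂μ := by
    rw [MeasureTheory.lintegral_prod _ hmeas.enorm.aemeasurable]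
    refine lintegral_congr fun z => ?_
    simp only [key]
    rw [lintegral_const_mul _ ((hkm z).ennreal_ofReal),
      ← ofReal_integral_eq_lintegral_ofReal (hki z) (Filter.Eventually.of_forall (hk0 z))]
  show (∫⁻ p, ‖g p.1 * k p.1 p.2‖ₑ ∂(μ.prod μ)) < ⊤
  rw [calc1]
  calc ∫⁻ z, ENNReal.ofReal (g z) * ENNReal.ofReal (∫ y, k z y ∂μ) ∂μ
      ≤ ∫⁻ z, ENNReal.ofReal (g z) * ENNReal.ofReal C ∂μ :=
        lintegral_mono fun z => mul_le_mul_right (ENNReal.ofReal_le_ofReal (hC z)) _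
    _ = ENNReal.ofReal (∫ z, g z ∂μ) * ENNReal.ofReal C := by
        rw [lintegral_mul_const _ hg.ennreal_ofReal,
          ofReal_integral_eq_lintegral_ofReal hgi (Filter.Eventually.of_forall hg0)]
    _ < ⊤ := ENNReal.mul_lt_top ENNReal.ofReal_lt_top ENNReal.ofReal_lt_top

theorem stmt_9 (d : ℕ) (hd : 1 ≤ d) (ε : ℝ) (hε : 0 < ε)
    (f : EuclideanSpace ℝ (Fin d) → EuclideanSpace ℝ (Fin d) → ℝ)
    (hf0 : ∀ x y, 0 ≤ f x y) (hfmeas : Measurable (Function.uncurry f))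
    (fε : EuclideanSpace ℝ (Fin d) → EuclideanSpace ℝ (Fin d) → ℝ)
    (hfε : ∀ x y, fε x y = if dist y x > ε then f x y else 0)
    (bε : EuclideanSpace ℝ (Fin d) → ℝ)
    (hbε : ∀ x, bε x = ∫ y, fε x y)
    (hint : ∀ x, Integrable (fε x))
    (bbar : ℝ) (hbbar : ∀ x, bε x ≤ bbar)
    (F : ℕ → EuclideanSpace ℝ (Fin d) → EuclideanSpace ℝ (Fin d) → ℝ)
    (hF1 : F 1 = fε)
    (hFrec : ∀ n : ℕ, 1 ≤ n → ∀ x y,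
      F (n + 1) x y = (∫ z, F n x z * fε z y) + (bbar - bε y) * F n x y
        + (bbar - bε x) ^ n * fε x y) :
    ∀ n : ℕ, 1 ≤ n → ∀ x,
      (∫ y, F n x y) = bbar ^ n - (bbar - bε x) ^ n := by
  have hE : True := trivial
  have hfεmeas : Measurable (Function.uncurry fε) := by
    have heq : Function.uncurry fε
        = fun p : EuclideanSpace ℝ (Fin d) × EuclideanSpace ℝ (Fin d) => if dist p.2 p.1 > ε then Function.uncurry f p else 0 := by
      funext p; exact hfε p.1 p.2
    rw [heq]
    exact Measurable.ite (measurableSet_lt measurable_const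
      (measurable_snd.dist measurable_fst)) hfmeas measurable_const
  have hfε0 : ∀ x y, 0 ≤ fε x y := by
    intro x y; rw [hfε]; split
    · exact hf0 x y
    · exact le_refl 0
  have hbεmeas : Measurable bε := by
    have heq : bε = fun x => ∫ y, Function.uncurry fε (x, y) := funext hbε
    rw [heq]
    exact hfεmeas.stronglyMeasurable.integral_prod_right'.measurable
  have hbε0 : ∀ x, 0 ≤ bε x := fun x => by
    rw [hbε]; exact integral_nonneg (hfε0 x)
  have key : ∀ n : ℕ, 1 ≤ n → Measurable (Function.uncurry (F n))
      ∧ (∀ x y, 0 ≤ F n x y) ∧ (∀ x, Integrable (F n x))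
      ∧ (∀ x, (∫ y, F n x y) = bbar ^ n - (bbar - bε x) ^ n) := by
    refine Nat.le_induction ?_ ?_
    · rw [hF1]
      refine ⟨hfεmeas, hfε0, hint, fun x => ?_⟩
      rw [← hbε x]; ring
    · rintro n hn ⟨hmeasn, h0n, hintn, hIn⟩
      have hFnx_meas : ∀ x, Measurable (F n x) :=
        fun x => hmeasn.comp measurable_prodMk_left
      have hprod : ∀ x, Integrable (fun p : EuclideanSpace ℝ (Fin d) × EuclideanSpace ℝ (Fin d) => F n x p.1 * fε p.1 p.2)
          (volume.prod volume) := fun x =>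
        aux_prod_integrable (hFnx_meas x) (h0n x) (hintn x) hfεmeas hfε0 hint
          (C := bbar) (fun z => by rw [← hbε]; exact hbbar z)
      have hg1i : ∀ x, Integrable fun y => ∫ z, F n x z * fε z y :=
        fun x => (hprod x).integral_prod_right
      have hbFi : ∀ x, Integrable fun z => bε z * F n x z := fun x =>
        (hintn x).bdd_mul (c := bbar) hbεmeas.aestronglyMeasurable
          (Filter.Eventually.of_forall fun z => by
            rw [Real.norm_eq_abs, abs_of_nonneg (hbε0 z)]; exact hbbar z)
      have hg2eq : ∀ x, (fun y => (bbar - bε y) * F n x y)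
          = fun y => bbar * F n x y - bε y * F n x y := by
        intro x; funext y; ring
      have hg2i : ∀ x, Integrable fun y => (bbar - bε y) * F n x y := fun x => by
        rw [hg2eq x]
        exact ((hintn x).const_mul bbar).sub (hbFi x)
      have hg3i : ∀ x, Integrable fun y => (bbar - bε x) ^ n * fε x y :=
        fun x => (hint x).const_mul _
      have hFeq : ∀ x, F (n + 1) x = fun y => (∫ z, F n x z * fε z y)
          + (bbar - bε y) * F n x y + (bbar - bε x) ^ n * fε x y :=
        fun x => funext fun y => hFrec n hn x y
      refine ⟨?_, ?_, ?_, ?_⟩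
      · -- measurability
        have heq : Function.uncurry (F (n + 1))
            = fun p : EuclideanSpace ℝ (Fin d) × EuclideanSpace ℝ (Fin d) => (∫ z, F n p.1 z * fε z p.2)
              + (bbar - bε p.2) * F n p.1 p.2 + (bbar - bε p.1) ^ n * fε p.1 p.2 :=
          funext fun p => hFrec n hn p.1 p.2
        rw [heq]
        have h1 : Measurable fun p : EuclideanSpace ℝ (Fin d) × EuclideanSpace ℝ (Fin d) => ∫ z, F n p.1 z * fε z p.2 := by
          have hG : Measurable fun q : (EuclideanSpace ℝ (Fin d) × EuclideanSpace ℝ (Fin d)) × EuclideanSpace ℝ (Fin d) => F n q.1.1 q.2 * fε q.2 q.1.2 :=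
            (hmeasn.comp ((measurable_fst.comp measurable_fst).prodMk measurable_snd)).mul
              (hfεmeas.comp (measurable_snd.prodMk (measurable_snd.comp measurable_fst)))
          exact hG.stronglyMeasurable.integral_prod_right'.measurable
        exact (h1.add ((measurable_const.sub (hbεmeas.comp measurable_snd)).mul hmeasn)).add
          (((measurable_const.sub (hbεmeas.comp measurable_fst)).pow_const n).mul hfεmeas)
      · -- nonnegativity
        intro x y
        rw [hFrec n hn x y]
        have h1 : 0 ≤ ∫ z, F n x z * fε z y :=
          integral_nonneg fun z => mul_nonneg (h0n x z) (hfε0 z y)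
        have h2 : (0:ℝ) ≤ (bbar - bε y) * F n x y :=
          mul_nonneg (sub_nonneg.2 (hbbar y)) (h0n x y)
        have h3 : (0:ℝ) ≤ (bbar - bε x) ^ n * fε x y :=
          mul_nonneg (pow_nonneg (sub_nonneg.2 (hbbar x)) n) (hfε0 x y)
        positivity
      · -- integrability
        intro x
        rw [hFeq x]
        exact ((hg1i x).add (hg2i x)).add (hg3i x)
      · -- the integral identity
        intro x
        simp only [hFrec n hn x]
        have hg12 : Integrable (fun y => (∫ z, F n x z * fε z y)
            + (bbar - bε y) * F n x y) volume := (hg1i x).add (hg2i x)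
        rw [integral_add hg12 (hg3i x), integral_add (hg1i x) (hg2i x)]
        have e1 : (∫ y, ∫ z, F n x z * fε z y) = ∫ z, bε z * F n x z := by
          rw [← MeasureTheory.integral_integral_swap
            (f := fun z y => F n x z * fε z y) (hprod x)]
          refine integral_congr_ae (Filter.Eventually.of_forall fun z => ?_)
          show (∫ y, F n x z * fε z y) = bε z * F n x z
          rw [MeasureTheory.integral_const_mul, ← hbε z, mul_comm]
        have e2 : (∫ y, (bbar - bε y) * F n x y)
            = bbar * (∫ y, F n x y) - ∫ y, bε y * F n x y := by
          rw [hg2eq x, integral_sub ((hintn x).const_mul bbar) (hbFi x),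
            MeasureTheory.integral_const_mul]
        have e3 : (∫ y, (bbar - bε x) ^ n * fε x y) = (bbar - bε x) ^ n * bε x := by
          rw [MeasureTheory.integral_const_mul, ← hbε x]
        rw [e1, e2, e3, hIn x]
        ring
  exact fun n hn x => (key n hn).2.2.2 x
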